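/- Let V : [0,∞) × [λ̲,∞) → ℝ satisfy: (i) V(x,λ) ≥ x for all (x,λ); (ii) V(x₂,λ) − V(x₁,λ) ≥ x₂ − x₁ whenever 0 ≤ x₁ ≤ x₂ (slope at least 1 in the first argument); (iii) for each fixed x the map λ' ↦ V(x,λ') is non-increasing. Let x̂ ≥ 0 and suppose g satisfies g(x,λ') = (x − x̂) + g(x̂,λ') for all x ≥ x̂ and all λ'. Fix M ≥ x̂ and λ > λ̲ such that λ' ↦ V(M,λ') is differentiable at λ, and define V_M(x,λ') = V(x,λ') for x ≤ M and V_M(x,λ') = V(M,λ') + x − M for x > M. Then for every x > M, V_M is differentiable at (x,λ) with ∂ₓV_M(x,λ) = 1 and ∂_λV_M(x,λ) = ∂_λV(M,λ), and ℒ(V_M)(x,λ) ≤ p − qM + ξ·(g(x̂,λ) − x̂) − d(λ − λ̲)·∂_λV(M,λ). -/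

import Mathlib

open MeasureTheory Set Filter Topology

/-- The integro-differential operator `ℒ` of the HJB equation, applied to a function `W`
whose partial derivatives at `(x,λ)` are `Wx` and `Wl`. -/
noncomputable def Lop (p d q β ξ lb : ℝ) (μ ν : Measure ℝ) (g : ℝ → ℝ → ℝ)
    (W : ℝ → ℝ → ℝ) (Wx Wl : ℝ) (x l : ℝ) : ℝ :=
  p * Wx - d * (l - lb) * Wl - (q + l + β) * W x l
    + l * ∫ α in Set.Icc (0:ℝ) x, W (x - α) l ∂μ
    + β * ∫ γ, W x (l + γ) ∂ν
    + ξ * (g x l - W x l)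

/-- An integral against a (sub-)probability measure of a function a.e. bounded by a
nonnegative constant `C` is at most `C`. -/
lemma integral_le_of_ae_le (m : Measure ℝ) [IsFiniteMeasure m] (f : ℝ → ℝ) (C : ℝ)
    (hC : 0 ≤ C) (hm : m Set.univ ≤ 1) (hf : ∀ᵐ a ∂m, f a ≤ C) :
    ∫ a, f a ∂m ≤ C := by
  by_cases h : Integrable f m
  · calc ∫ a, f a ∂m ≤ ∫ _, C ∂m := integral_mono_ae h (integrable_const C) hf
      _ = C * (m Set.univ).toReal := by simp [mul_comm, measureReal_def]
      _ ≤ C * 1 := by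
          gcongr
          · exact (ENNReal.toReal_le_toReal (measure_ne_top m _) ENNReal.one_ne_top).mpr hm |>.trans
              (by simp)
      _ = C := mul_one C
  · rw [integral_undef h]; exact hC

/-- Key estimate in the proof of Proposition 4.1: for `x > M` the truncated value
function `V_M` is differentiable at `(x,λ)` with `∂ₓV_M = 1` and
`∂_λV_M(x,λ) = ∂_λV(M,λ)`, and `ℒ(V_M)(x,λ) ≤ p − qM + ξ(g(x̂,λ) − x̂) − d(λ−λ̲)∂_λV(M,λ)`. -/
theorem truncated_value_supersolution_estimate
    (p d q β ξ lb : ℝ) (hp : 0 < p) (hd : 0 < d) (hq : 0 < q) (hβ : 0 < β)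
    (hξ : 0 < ξ) (hlb : 0 < lb)
    (μ ν : Measure ℝ) [IsProbabilityMeasure μ] [IsProbabilityMeasure ν]
    (hμ : μ (Set.Iio 0) = 0) (hν : ν (Set.Iic 0) = 0)
    (g : ℝ → ℝ → ℝ) (hg_meas : Measurable (fun q : ℝ × ℝ => g q.1 q.2))
    (hg_nonneg : ∀ x l, 0 ≤ x → lb ≤ l → 0 ≤ g x l)
    (V : ℝ → ℝ → ℝ)
    (hV_ge : ∀ x l, 0 ≤ x → lb ≤ l → x ≤ V x l)
    (hV_slope : ∀ x₁ x₂ l, 0 ≤ x₁ → x₁ ≤ x₂ → lb ≤ l → x₂ - x₁ ≤ V x₂ l - V x₁ l)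
    (hV_antitone : ∀ x l₁ l₂, 0 ≤ x → lb ≤ l₁ → l₁ ≤ l₂ → V x l₂ ≤ V x l₁)
    (xhat : ℝ) (hxhat : 0 ≤ xhat)
    (hg_affine : ∀ x l, xhat ≤ x → lb ≤ l → g x l = (x - xhat) + g xhat l)
    (M l : ℝ) (hM : xhat ≤ M) (hl : lb < l)
    (hVdiff : DifferentiableAt ℝ (fun l' => V M l') l)
    (VM : ℝ → ℝ → ℝ)
    (hVM : ∀ x l', VM x l' = if x ≤ M then V x l' else V M l' + x - M)
    (x : ℝ) (hx : M < x) :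
    HasDerivAt (fun y => VM y l) 1 x ∧
    HasDerivAt (fun l' => VM x l') (deriv (fun l' => V M l') l) l ∧
    Lop p d q β ξ lb μ ν g VM 1 (deriv (fun l' => V M l') l) x l ≤
      p - q * M + ξ * (g xhat l - xhat) - d * (l - lb) * deriv (fun l' => V M l') l := by
  have hM0 : (0:ℝ) ≤ M := le_trans hxhat hM
  have hx0 : (0:ℝ) ≤ x := le_trans hM0 hx.le
  have hVMl : M ≤ V M l := hV_ge M l hM0 hl.le
  have hVMxl : VM x l = V M l + x - M := by
    rw [hVM, if_neg (not_le.2 hx)]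
  set C := V M l + x - M with hCdef
  have hC0 : (0:ℝ) ≤ C := by simp only [hCdef]; linarith
  -- Part 1: derivative in x
  have h1 : HasDerivAt (fun y => VM y l) 1 x := by
    have hd1 : HasDerivAt (fun y : ℝ => V M l + y - M) 1 x := by
      simpa using ((hasDerivAt_id x).const_add (V M l)).sub_const M
    apply hd1.congr_of_eventuallyEq
    filter_upwards [Ioi_mem_nhds hx] with y hy
    rw [hVM, if_neg (not_le.2 hy)]
  -- Part 2: derivative in l
  have h2 : HasDerivAt (fun l' => VM x l') (deriv (fun l' => V M l') l) l := by
    have heq : (fun l' => VM x l') = fun l' => V M l' + x - M := by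
      funext l'; rw [hVM, if_neg (not_le.2 hx)]
    rw [heq]
    exact (hVdiff.hasDerivAt.add_const x).sub_const M
  refine ⟨h1, h2, ?_⟩
  -- Bound the claim-size integral
  have hA : ∫ α in Set.Icc (0:ℝ) x, VM (x - α) l ∂μ ≤ C := by
    apply integral_le_of_ae_le _ _ _ hC0
    · rw [Measure.restrict_apply_univ]
      exact prob_le_one
    · filter_upwards [ae_restrict_mem measurableSet_Icc] with α hα
      obtain ⟨hα0, hαx⟩ := hα
      rw [hVM]
      split_ifs with h
      · have hslope := hV_slope (x - α) M l (by linarith) h hl.le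
        simp only [hCdef]; linarith
      · simp only [hCdef]; linarith
  -- Bound the intensity-jump integral
  have hpos : ∀ᵐ γ ∂ν, 0 < γ := by
    rw [ae_iff]
    convert hν using 2
    ext γ; simp [not_lt]
  have hB : ∫ γ, VM x (l + γ) ∂ν ≤ C := by
    apply integral_le_of_ae_le _ _ _ hC0 (le_of_eq (by simp))
    filter_upwards [hpos] with γ hγ
    rw [hVM, if_neg (not_le.2 hx)]
    have := hV_antitone M l (l + γ) hM0 hl.le (by linarith)
    simp only [hCdef]; linarith
  have hgx : g x l = (x - xhat) + g xhat l := hg_affine x l (by linarith) hl.le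
  -- Put everything together
  rw [Lop, hVMxl, hgx]
  have hl0 : (0:ℝ) < l := lt_trans hlb hl
  have hA' : l * ∫ α in Set.Icc (0:ℝ) x, VM (x - α) l ∂μ ≤ l * C :=
    mul_le_mul_of_nonneg_left hA hl0.le
  have hB' : β * ∫ γ, VM x (l + γ) ∂ν ≤ β * C :=
    mul_le_mul_of_nonneg_left hB hβ.le
  have hqC : q * M ≤ q * C := by
    apply mul_le_mul_of_nonneg_left _ hq.le
    simp only [hCdef]; linarith
  have hξC : ξ * M ≤ ξ * V M l := mul_le_mul_of_nonneg_left hVMl hξ.le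
  simp only [hCdef] at hA' hB' hqC ⊢
  nlinarith [hA', hB', hqC, hξC]
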